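/- (Aimar) Let X be a nonempty set, Δ = {(x,x) : x ∈ X} the diagonal of X × X, and V : (0,∞) → P(X × X) satisfy: (j) ⋂_{r>0} V(r) = Δ; (jj) ⋃_{r>0} V(r) = X × X; (jjj) 0 < r₁ ≤ r₂ implies V(r₁) ⊆ V(r₂); and (jv) there exists c ≥ 1 such that if (x,z) ∈ V(r) and (z,y) ∈ V(r) for some z, then (x,y) ∈ V(cr). Define d(x,y) = inf{ r > 0 : (x,y) ∈ V(r) }. Then: (1) d satisfies the c-relaxed triangle inequality d(x,y) ≤ c(d(x,z) + d(z,y)) for all x,y,z ∈ X; and (2) for every γ with 0 < γ < 1 and every r > 0, V(γr) ⊆ W_d(r) ⊆ V(r), where W_d(r) = {(x,y) ∈ X × X : d(x,y) < r}. -/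
import Mathlib


/-- **Aimar's characterization via antourages.** Given a family `V(r) ⊆ X × X`
satisfying (j)–(jv), the function `d(x,y) = inf{r > 0 : (x,y) ∈ V(r)}` satisfies
the `c`-relaxed triangle inequality and `V(γr) ⊆ W_d(r) ⊆ V(r)` for `0 < γ < 1`. -/
theorem aimar_antourages {X : Type*} [Nonempty X]
    (V : ℝ → Set (X × X)) (c : ℝ) (hc : 1 ≤ c)
    (h1 : (⋂ r > (0:ℝ), V r) = {p : X × X | p.1 = p.2})
    (h2 : (⋃ r > (0:ℝ), V r) = Set.univ)
    (h3 : ∀ r₁ r₂ : ℝ, 0 < r₁ → r₁ ≤ r₂ → V r₁ ⊆ V r₂)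
    (h4 : ∀ (r : ℝ), 0 < r → ∀ x y z : X, (x, z) ∈ V r → (z, y) ∈ V r → (x, y) ∈ V (c * r))
    (d : X → X → ℝ)
    (hd : ∀ x y, d x y = sInf {r : ℝ | 0 < r ∧ (x, y) ∈ V r}) :
    (∀ x y z, d x y ≤ c * (d x z + d z y)) ∧
    (∀ γ : ℝ, 0 < γ → γ < 1 → ∀ r : ℝ, 0 < r →
      V (γ * r) ⊆ {p : X × X | d p.1 p.2 < r} ∧ {p : X × X | d p.1 p.2 < r} ⊆ V r) := by
  have hne : ∀ x y : X, {r : ℝ | 0 < r ∧ (x, y) ∈ V r}.Nonempty := by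
    intro x y
    have : (x, y) ∈ (⋃ r > (0:ℝ), V r) := by rw [h2]; trivial
    simp only [Set.mem_iUnion] at this
    obtain ⟨r, hr, hm⟩ := this
    exact ⟨r, hr, hm⟩
  have hbd : ∀ x y : X, BddBelow {r : ℝ | 0 < r ∧ (x, y) ∈ V r} :=
    fun x y => ⟨0, fun r hr => hr.1.le⟩
  have hle : ∀ (x y : X) (r : ℝ), 0 < r → (x, y) ∈ V r → d x y ≤ r := by
    intro x y r hr hm
    rw [hd]
    exact csInf_le (hbd x y) ⟨hr, hm⟩
  have hlt : ∀ (x y : X) (r : ℝ), d x y < r → ∃ s, 0 < s ∧ s < r ∧ (x, y) ∈ V s := by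
    intro x y r hr
    rw [hd] at hr
    obtain ⟨s, hs, hsr⟩ := (csInf_lt_iff (hbd x y) (hne x y)).mp hr
    exact ⟨s, hs.1, hsr, hs.2⟩
  constructor
  · intro x y z
    have key : ∀ ε > (0:ℝ), d x y ≤ c * (d x z + d z y) + (2 * c) * ε := by
      intro ε hε
      have hdxz : d x z < d x z + ε := by linarith
      have hdzy : d z y < d z y + ε := by linarith
      obtain ⟨r₁, hr₁, hr₁lt, hm₁⟩ := hlt x z _ hdxz
      obtain ⟨r₂, hr₂, hr₂lt, hm₂⟩ := hlt z y _ hdzy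
      set r := max r₁ r₂ with hrdef
      have hrpos : 0 < r := lt_max_of_lt_left hr₁
      have hm₁' : (x, z) ∈ V r := h3 r₁ r hr₁ (le_max_left _ _) hm₁
      have hm₂' : (z, y) ∈ V r := h3 r₂ r hr₂ (le_max_right _ _) hm₂
      have hxy := h4 r hrpos x y z hm₁' hm₂'
      have hcpos : 0 < c := lt_of_lt_of_le one_pos hc
      have h5 : d x y ≤ c * r := hle x y _ (mul_pos hcpos hrpos) hxy
      have hr12 : r ≤ r₁ + r₂ := max_le (by linarith) (by linarith)
      nlinarith
    by_contra h
    push_neg at h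
    have hcpos : 0 < c := lt_of_lt_of_le one_pos hc
    have h2c : (0:ℝ) < 2 * c := by linarith
    have := key ((d x y - c * (d x z + d z y)) / (2 * c) / 2)
      (div_pos (div_pos (by linarith) h2c) two_pos)
    rw [div_div] at this
    nlinarith [mul_div_cancel₀ (d x y - c * (d x z + d z y)) (ne_of_gt (by linarith : (0:ℝ) < 2 * c * 2))]
  · intro γ hγ hγ1 r hr
    constructor
    · intro p hp
      have := hle p.1 p.2 (γ * r) (by positivity) (by simpa using hp)
      have : d p.1 p.2 < r := lt_of_le_of_lt this (by nlinarith)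
      exact this
    · intro p hp
      obtain ⟨s, hs, hsr, hm⟩ := hlt p.1 p.2 r hp
      exact h3 s r hs hsr.le (by simpa using hm)
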